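/- arXiv:2603.10406 — 2 statements merged into one kernel-verified Lean document; each statement's English description precedes it below -/
import Mathlib

section
/- Let n ≥ 4 be an integer. Then the largest eigenvalue of Q'_n equals n, and the second-largest eigenvalue satisfies λ₂(Q'_n) < n. -/
open Matrix

/-- The ascending sorted list of eigenvalues (with multiplicity) of a real
symmetric (Hermitian) matrix; junk value `[]` otherwise. -/
noncomputable def eigsList {m : Type*} [Fintype m] [DecidableEq m]
    (M : Matrix m m ℝ) : List ℝ :=
  if h : M.IsHermitian then Multiset.sort (Finset.univ.val.map h.eigenvalues) (· ≤ ·)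
  else []

/-- The `k`-th largest eigenvalue (1-indexed, counted with multiplicity). -/
noncomputable def kthLargest {m : Type*} [Fintype m] [DecidableEq m]
    (M : Matrix m m ℝ) (k : ℕ) : ℝ :=
  (eigsList M).getD (Fintype.card m - k) 0

/-- The `k`-th smallest eigenvalue (1-indexed, counted with multiplicity). -/
noncomputable def kthSmallest {m : Type*} [Fintype m] [DecidableEq m]
    (M : Matrix m m ℝ) (k : ℕ) : ℝ :=
  (eigsList M).getD (k - 1) 0

/-- The Laplacian `𝔏(M) = diag(M·1) − M`. -/
noncomputable def Lap {n : ℕ} (M : Matrix (Fin n) (Fin n) ℝ) : Matrix (Fin n) (Fin n) ℝ :=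
  Matrix.diagonal (fun i => ∑ j, M i j) - M

/-- The matrix `Q_n` (1-indexed description, realized on `Fin n`). -/
noncomputable def Qmat (n : ℕ) : Matrix (Fin n) (Fin n) ℝ := fun i j =>
  let d := ((i.val : ℤ) - (j.val : ℤ)).natAbs
  if d = 0 then
    (if i.val = 0 ∨ i.val = n - 1 then ((n : ℝ) ^ 2 - n - 6) / 2
     else if i.val = 1 ∨ i.val = n - 2 then ((n : ℝ) ^ 2 - 3 * n - 2) / 2
     else ((n : ℝ) ^ 2 - 3 * n - 6) / 2)
  else if d = 1 then (n : ℝ) - 2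
  else if d = 2 then 2
  else 0

/-- The matrix `Q'_n` (1-indexed description, realized on `Fin n`). -/
noncomputable def Qp (n : ℕ) : Matrix (Fin n) (Fin n) ℝ := fun i j =>
  let a := i.val + 1
  let b := j.val + 1
  if (a = 1 ∧ b = 2) ∨ (a = 2 ∧ b = 1) then (n : ℝ) - 2
  else if (a = 1 ∧ b = 3) ∨ (a = 3 ∧ b = 1) then 2
  else if a = 2 ∧ b = 2 then 1
  else if (a = 2 ∧ b = 3) ∨ (a = 3 ∧ b = 2) then 1
  else if a = 3 ∧ b = 3 then (n : ℝ) - 4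
  else if (3 ≤ a ∧ a ≤ n - 1 ∧ b = a + 1) ∨ (3 ≤ b ∧ b ≤ n - 1 ∧ a = b + 1) then 1
  else if a = b ∧ 4 ≤ a ∧ a ≤ n - 1 then (n : ℝ) - 2
  else if a = n ∧ b = n then (n : ℝ) - 1
  else 0

namespace Stmt16Aux

/-- ℕ-indexed entry function for `Qp`. -/
noncomputable def q (n a b : ℕ) : ℝ :=
  if (a = 1 ∧ b = 2) ∨ (a = 2 ∧ b = 1) then (n : ℝ) - 2
  else if (a = 1 ∧ b = 3) ∨ (a = 3 ∧ b = 1) then 2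
  else if a = 2 ∧ b = 2 then 1
  else if (a = 2 ∧ b = 3) ∨ (a = 3 ∧ b = 2) then 1
  else if a = 3 ∧ b = 3 then (n : ℝ) - 4
  else if (3 ≤ a ∧ a ≤ n - 1 ∧ b = a + 1) ∨ (3 ≤ b ∧ b ≤ n - 1 ∧ a = b + 1) then 1
  else if a = b ∧ 4 ≤ a ∧ a ≤ n - 1 then (n : ℝ) - 2
  else if a = n ∧ b = n then (n : ℝ) - 1
  else 0

lemma Qp_eq_q (n : ℕ) (i j : Fin n) : Qp n i j = q n (i.val + 1) (j.val + 1) := rfl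

lemma q_symm (n a b : ℕ) : q n a b = q n b a := by
  unfold q
  exact if_congr (by tauto) rfl (if_congr (by tauto) rfl (if_congr (by tauto) rfl
    (if_congr (by tauto) rfl (if_congr (by tauto) rfl (if_congr (by tauto) rfl
    (if_congr (by omega) rfl (if_congr (by tauto) rfl rfl)))))))

variable {n : ℕ}

set_option maxHeartbeats 800000 in
lemma q_row1 (hn : 4 ≤ n) (b : ℕ) (hb : 1 ≤ b) :
    q n 1 b = if b = 2 then (n:ℝ)-2 else if b = 3 then 2 else 0 := by
  unfold q; split_ifs <;> first | rfl | omega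

set_option maxHeartbeats 800000 in
lemma q_row2 (hn : 4 ≤ n) (b : ℕ) (hb : 1 ≤ b) :
    q n 2 b = if b = 1 then (n:ℝ)-2 else if b = 2 then 1 else if b = 3 then 1 else 0 := by
  unfold q; split_ifs <;> first | rfl | omega

set_option maxHeartbeats 800000 in
lemma q_row3 (hn : 4 ≤ n) (b : ℕ) (hb : 1 ≤ b) :
    q n 3 b = if b = 1 then 2 else if b = 2 then 1 else if b = 3 then (n:ℝ)-4
      else if b = 4 then 1 else 0 := by
  unfold q; split_ifs <;> first | rfl | omega

set_option maxHeartbeats 800000 in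
lemma q_rowmid (hn : 4 ≤ n) (a b : ℕ) (ha : 4 ≤ a) (ha' : a ≤ n - 1) (hb : 1 ≤ b) :
    q n a b = if b = a - 1 then 1 else if b = a then (n:ℝ)-2 else if b = a + 1 then 1 else 0 := by
  unfold q; split_ifs <;> first | rfl | omega

set_option maxHeartbeats 800000 in
lemma q_rowlast (hn : 4 ≤ n) (b : ℕ) (hb : 1 ≤ b) :
    q n n b = if b = n - 1 then 1 else if b = n then (n:ℝ)-1 else 0 := by
  unfold q; split_ifs <;> first | rfl | omega

lemma q_nonneg (hn : 4 ≤ n) (a b : ℕ) : 0 ≤ q n a b := by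
  have h4 : (4:ℝ) ≤ (n:ℝ) := by exact_mod_cast hn
  unfold q; split_ifs <;> linarith

lemma q_12 : q n 1 2 = (n:ℝ) - 2 := by simp [q]
lemma q_13 : q n 1 3 = 2 := by simp [q]

set_option maxHeartbeats 800000 in
lemma q_path (a : ℕ) (h3 : 3 ≤ a) (h1 : a ≤ n - 1) : q n a (a+1) = 1 := by
  unfold q; split_ifs <;> first | rfl | omega

lemma quad_form (L : Matrix (Fin n) (Fin n) ℝ) (hsym : Lᵀ = L)
    (hrow : ∀ i, ∑ j, L i j = 0) (x : Fin n → ℝ) :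
    x ⬝ᵥ L *ᵥ x = (1/2) * ∑ i, ∑ j, (-L i j) * (x i - x j)^2 := by
  have hS : ∀ i j, L i j = L j i := fun i j =>
    (congrFun (congrFun hsym i) j).symm.trans (Matrix.transpose_apply L i j)
  have hcol : ∀ j, ∑ i, L i j = 0 := by
    intro j; rw [← hrow j]
    exact Finset.sum_congr rfl fun i _ => hS i j
  have key : ∑ i, ∑ j, (-L i j) * (x i - x j)^2
      = ∑ i, ∑ j, ((-(x i^2)) * L i j + ((x i * (L i j * x j) + x i * (L i j * x j)) + (-(x j^2)) * L i j)) :=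
    Finset.sum_congr rfl fun i _ => Finset.sum_congr rfl fun j _ => by ring
  have third : ∑ i : Fin n, ∑ j : Fin n, (-(x j^2)) * L i j = 0 := by
    rw [Finset.sum_comm]
    simp_rw [← Finset.mul_sum, hcol, mul_zero, Finset.sum_const_zero]
  rw [key]
  simp_rw [Finset.sum_add_distrib, ← Finset.mul_sum, hrow, mul_zero,
    Finset.sum_const_zero, zero_add]
  rw [third, add_zero]
  simp [dotProduct, Matrix.mulVec, Finset.mul_sum]
  ring_nf

lemma sorted_top (l : List ℝ) (c : ℝ) (hs : l.Pairwise (· ≤ ·)) (hmem : c ∈ l)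
    (hle : ∀ a ∈ l, a ≤ c) (hcount : l.count c = 1) (hlen : 2 ≤ l.length) :
    l.getD (l.length - 1) 0 = c ∧ l.getD (l.length - 2) 0 < c := by
  have h1 : l.length - 1 < l.length := by omega
  have h2 : l.length - 2 < l.length := by omega
  have hlast : l.get ⟨l.length - 1, h1⟩ = c := by
    obtain ⟨i, hi⟩ := List.mem_iff_get.mp hmem
    have hub : l.get i ≤ l.get ⟨l.length - 1, h1⟩ :=
      hs.rel_get_of_le (by simp [Fin.le_def]; omega)
    exact le_antisymm (hle _ (l.get_mem _)) (hi ▸ hub)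
  have hsnd : l.get ⟨l.length - 2, h2⟩ ≤ c := hle _ (l.get_mem _)
  have hne : l.get ⟨l.length - 2, h2⟩ ≠ c := by
    intro hx
    have hdrop : l.drop (l.length - 2) = [c, c] := by
      apply List.ext_getElem
      · simp; omega
      · intro i hi hi2
        simp only [List.getElem_drop]
        have hi' : i = 0 ∨ i = 1 := by rw [List.length_drop] at hi; omega
        rcases hi' with rfl | rfl
        · simpa using hx
        · have he : l.length - 2 + 1 = l.length - 1 := by omega
          have := hlast
          rw [List.get_eq_getElem] at this
          simp only [List.getElem_cons_succ, List.getElem_cons_zero, he]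
          exact this
    have : ([c, c] : List ℝ).count c ≤ l.count c :=
      hdrop ▸ (l.drop_sublist (l.length - 2)).count_le c
    simp [List.count_cons] at this
    omega
  rw [List.getD_eq_getElem _ _ h1, List.getD_eq_getElem _ _ h2]
  exact ⟨hlast, lt_of_le_of_ne hsnd hne⟩


lemma sum_ind (j₀ : Fin n) (v : ℝ) : ∑ j : Fin n, (if j = j₀ then v else 0) = v := by
  rw [Finset.sum_ite_eq' Finset.univ j₀ (fun _ => v)]; simp

lemma Qp_rowsum (hn : 4 ≤ n) (i : Fin n) : ∑ j, Qp n i j = (n:ℝ) := by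
  have hi := i.isLt
  by_cases h0 : i.val = 0
  · have e : ∀ j : Fin n, Qp n i j =
        (if j = (⟨1, by omega⟩ : Fin n) then (n:ℝ)-2 else 0)
        + (if j = (⟨2, by omega⟩ : Fin n) then 2 else 0) := by
      intro j
      rw [Qp_eq_q, h0, q_row1 hn _ (by omega)]
      simp only [Fin.ext_iff]
      split_ifs <;> first | omega | norm_num
    simp_rw [e, Finset.sum_add_distrib, sum_ind]; ring
  · by_cases h1 : i.val = 1
    · have e : ∀ j : Fin n, Qp n i j =
          (if j = (⟨0, by omega⟩ : Fin n) then (n:ℝ)-2 else 0)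
          + (if j = (⟨1, by omega⟩ : Fin n) then 1 else 0)
          + (if j = (⟨2, by omega⟩ : Fin n) then 1 else 0) := by
        intro j
        rw [Qp_eq_q, h1, q_row2 hn _ (by omega)]
        simp only [Fin.ext_iff]
        split_ifs <;> first | omega | norm_num
      simp_rw [e, Finset.sum_add_distrib, sum_ind]; ring
    · by_cases h2 : i.val = 2
      · have e : ∀ j : Fin n, Qp n i j =
            (if j = (⟨0, by omega⟩ : Fin n) then 2 else 0)
            + (if j = (⟨1, by omega⟩ : Fin n) then 1 else 0)
            + (if j = (⟨2, by omega⟩ : Fin n) then (n:ℝ)-4 else 0)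
            + (if j = (⟨3, by omega⟩ : Fin n) then 1 else 0) := by
          intro j
          rw [Qp_eq_q, h2, q_row3 hn _ (by omega)]
          simp only [Fin.ext_iff]
          split_ifs <;> first | omega | norm_num
        simp_rw [e, Finset.sum_add_distrib, sum_ind]; ring
      · by_cases h3 : i.val = n - 1
        · have e : ∀ j : Fin n, Qp n i j =
              (if j = (⟨n-2, by omega⟩ : Fin n) then 1 else 0)
              + (if j = (⟨n-1, by omega⟩ : Fin n) then (n:ℝ)-1 else 0) := by
            intro j
            have ha : i.val + 1 = n := by omega
            rw [Qp_eq_q, ha, q_rowlast hn _ (by omega)]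
            simp only [Fin.ext_iff]
            split_ifs <;> first | omega | norm_num
          simp_rw [e, Finset.sum_add_distrib, sum_ind]; ring
        · have hmid : 3 ≤ i.val ∧ i.val ≤ n - 2 := by omega
          have e : ∀ j : Fin n, Qp n i j =
              (if j = (⟨i.val-1, by omega⟩ : Fin n) then 1 else 0)
              + (if j = (⟨i.val, by omega⟩ : Fin n) then (n:ℝ)-2 else 0)
              + (if j = (⟨i.val+1, by omega⟩ : Fin n) then 1 else 0) := by
            intro j
            rw [Qp_eq_q, q_rowmid hn _ _ (by omega) (by omega) (by omega)]
            simp only [Fin.ext_iff]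
            split_ifs <;> first | omega | norm_num
          simp_rw [e, Finset.sum_add_distrib, sum_ind]; ring



lemma eig_facts {N : ℕ} (A : Matrix (Fin N) (Fin N) ℝ) (hA : A.IsHermitian) :
    ∃ w : Fin N → Fin N → ℝ,
      (∀ i, A *ᵥ w i = hA.eigenvalues i • w i) ∧
      (∀ i, w i ⬝ᵥ w i = 1) ∧
      (∀ i j, i ≠ j → w i ⬝ᵥ w j = 0) ∧
      (∀ y : Fin N → ℝ, (∀ i, w i ⬝ᵥ y = 0) → y = 0) := by
  set v := hA.eigenvectorBasis with hv
  refine ⟨fun i k => v i k, fun i => hA.mulVec_eigenvectorBasis i, ?_, ?_, ?_⟩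
  · intro i
    have h := orthonormal_iff_ite.mp v.orthonormal i i
    simp only [if_true, eq_self_iff_true] at h
    rw [← h, PiLp.inner_apply]
    simp [dotProduct, RCLike.inner_apply, starRingEnd_apply]
    exact Finset.sum_congr rfl fun _ _ => by ring
  · intro i j hij
    have h := orthonormal_iff_ite.mp v.orthonormal i j
    rw [if_neg hij] at h
    rw [← h, PiLp.inner_apply]
    simp [dotProduct, RCLike.inner_apply, starRingEnd_apply]
    exact Finset.sum_congr rfl fun _ _ => by ring
  · intro y hy
    set u : EuclideanSpace ℝ (Fin N) := WithLp.toLp 2 y with hu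
    have hrep : v.repr u = 0 := by
      ext i
      rw [v.repr_apply_apply]
      have : (inner ℝ (v i) u : ℝ) = (fun k => v i k) ⬝ᵥ y := by
        rw [PiLp.inner_apply]
        simp [dotProduct, RCLike.inner_apply, starRingEnd_apply]
        exact Finset.sum_congr rfl fun _ _ => by rw [hu]; ring
      rw [this, hy i]
      rfl
    have : u = 0 := v.repr.injective (by rw [hrep, map_zero])
    simpa [hu] using congrArg WithLp.ofLp this

lemma main_eig (hn : 4 ≤ n) :
    ∃ i₀ : Fin n, (Qp n).IsHermitian ∧
      ∀ h : (Qp n).IsHermitian,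
        h.eigenvalues i₀ = n ∧ (∀ i, h.eigenvalues i ≤ n) ∧
        (∀ i, h.eigenvalues i = n → i = i₀) := by
  have hn0 : 0 < n := by omega
  have hsymm' : ∀ i j : Fin n, Qp n j i = Qp n i j := fun i j => by
    rw [Qp_eq_q, Qp_eq_q, q_symm]
  have hA : (Qp n).IsHermitian := by
    ext i j
    simp only [Matrix.conjTranspose_apply, star_trivial]
    exact hsymm' i j
  have hAT : (Qp n)ᵀ = Qp n := by
    ext i j; rw [Matrix.transpose_apply]; exact hsymm' i j
  set L : Matrix (Fin n) (Fin n) ℝ := (n:ℝ) • (1 : Matrix (Fin n) (Fin n) ℝ) - Qp n with hLdef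
  have hLsym : Lᵀ = L := by
    rw [hLdef, Matrix.transpose_sub, Matrix.transpose_smul, Matrix.transpose_one, hAT]
  have hLrow : ∀ i, ∑ j, L i j = 0 := by
    intro i
    have h1 : ∑ j, ((n:ℝ) • (1 : Matrix (Fin n) (Fin n) ℝ)) i j = (n:ℝ) := by
      simp [Matrix.one_apply, Finset.sum_ite_eq]
    rw [hLdef]
    simp only [Matrix.sub_apply, Finset.sum_sub_distrib]
    rw [h1, Qp_rowsum hn i]; ring
  have hLoff : ∀ i j : Fin n, i ≠ j → -L i j = Qp n i j := by
    intro i j hij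
    rw [hLdef]
    simp [Matrix.sub_apply, Matrix.one_apply, hij]
  have hterm : ∀ (x : Fin n → ℝ) (i j : Fin n), 0 ≤ (-L i j) * (x i - x j)^2 := by
    intro x i j
    rcases eq_or_ne i j with rfl | hij
    · simp
    · rw [hLoff i j hij]
      exact mul_nonneg (by rw [Qp_eq_q]; exact q_nonneg hn _ _) (sq_nonneg _)
  have hquad := quad_form L hLsym hLrow
  have hquad_nonneg : ∀ x : Fin n → ℝ, 0 ≤ x ⬝ᵥ L *ᵥ x := by
    intro x
    rw [hquad x]
    have : (0:ℝ) ≤ ∑ i, ∑ j, (-L i j) * (x i - x j)^2 :=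
      Finset.sum_nonneg fun i _ => Finset.sum_nonneg fun j _ => hterm x i j
    linarith
  have hquad' : ∀ (x : Fin n → ℝ) (μ : ℝ), Qp n *ᵥ x = μ • x →
      x ⬝ᵥ L *ᵥ x = ((n:ℝ) - μ) * (x ⬝ᵥ x) := by
    intro x μ hx
    rw [hLdef, Matrix.sub_mulVec, Matrix.smul_mulVec, Matrix.one_mulVec, hx,
      dotProduct_sub, dotProduct_smul, dotProduct_smul,
      smul_eq_mul, smul_eq_mul]
    ring
  obtain ⟨w, hmv, hvv, hvw, hcomplete⟩ := eig_facts (Qp n) hA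
  set lam := hA.eigenvalues with hlam
  have hle_n : ∀ i, lam i ≤ n := by
    intro i
    have h0 := hquad_nonneg (w i)
    rw [hquad' _ _ (hmv i), hvv i, mul_one] at h0
    linarith
  -- constancy for eigenvalue-n eigenvectors
  have hconst : ∀ (x : Fin n → ℝ), Qp n *ᵥ x = (n:ℝ) • x →
      ∀ k : Fin n, x k = x ⟨0, hn0⟩ := by
    intro x hx
    have hq0 : x ⬝ᵥ L *ᵥ x = 0 := by
      rw [hquad' _ _ hx, sub_self, zero_mul]
    have hsum0 : ∑ i, ∑ j, (-L i j) * (x i - x j)^2 = 0 := by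
      rw [hquad x] at hq0; linarith
    have hterms0 : ∀ i j : Fin n, (-L i j) * (x i - x j)^2 = 0 := by
      intro i j
      have h2 := (Finset.sum_eq_zero_iff_of_nonneg
        (fun i _ => Finset.sum_nonneg (fun j _ => hterm x i j))).mp hsum0 i (Finset.mem_univ i)
      exact (Finset.sum_eq_zero_iff_of_nonneg
        (fun j _ => hterm x i j)).mp h2 j (Finset.mem_univ j)
    have hedge : ∀ a b : Fin n, a ≠ b → 0 < Qp n a b → x a = x b := by
      intro a b hab hpos
      have h0 := hterms0 a b
      rw [hLoff a b hab] at h0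
      rcases mul_eq_zero.mp h0 with h | h
      · exact absurd h (ne_of_gt hpos)
      · have := pow_eq_zero_iff (n := 2) (by norm_num) |>.mp h
        linarith [sub_eq_zero.mp this]
    have h4 : (4:ℝ) ≤ (n:ℝ) := by exact_mod_cast hn
    have key : ∀ m (hm : m < n), x ⟨m, hm⟩ = x ⟨0, hn0⟩ := by
      intro m
      induction m using Nat.strong_induction_on with
      | _ m ih =>
        intro hm
        match m, hm with
        | 0, hm => rfl
        | 1, hm =>
          exact (hedge ⟨0, hn0⟩ ⟨1, hm⟩ (by simp [Fin.ext_iff]) (by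
            rw [Qp_eq_q]
            show (0:ℝ) < q n 1 2
            rw [q_12]; linarith)).symm
        | 2, hm =>
          exact (hedge ⟨0, hn0⟩ ⟨2, hm⟩ (by simp [Fin.ext_iff]) (by
            rw [Qp_eq_q]
            show (0:ℝ) < q n 1 3
            rw [q_13]; norm_num)).symm
        | (m+3), hm =>
          have e1 : x ⟨m+2, by omega⟩ = x ⟨m+3, hm⟩ := by
            apply hedge _ _ (by simp [Fin.ext_iff])
            rw [Qp_eq_q]
            show (0:ℝ) < q n (m+3) (m+4)
            rw [show m+4 = (m+3)+1 from rfl, q_path (m+3) (by omega) (by omega)]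
            norm_num
          rw [← e1]
          exact ih (m+2) (by omega) (by omega)
    intro k
    have := key k.val k.isLt
    simpa using this
  -- at most one eigenvalue equal to n
  have huniq : ∀ i j : Fin n, lam i = n → lam j = n → i = j := by
    intro i j hi hj
    by_contra hij
    have hxc := hconst (w i) (by rw [hmv i, hi])
    have hyc := hconst (w j) (by rw [hmv j, hj])
    set c := w i ⟨0, hn0⟩ with hc
    set d := w j ⟨0, hn0⟩ with hd
    have hcc : (n:ℝ) * (c * c) = 1 := by
      rw [← hvv i, dotProduct]
      rw [Finset.sum_congr rfl (fun k _ => by rw [hxc k])]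
      simp [Finset.sum_const, Finset.card_univ, mul_comm, mul_assoc]
    have hdd : (n:ℝ) * (d * d) = 1 := by
      rw [← hvv j, dotProduct]
      rw [Finset.sum_congr rfl (fun k _ => by rw [hyc k])]
      simp [Finset.sum_const, Finset.card_univ, mul_comm, mul_assoc]
    have hcd : (n:ℝ) * (c * d) = 0 := by
      rw [← hvw i j hij, dotProduct]
      rw [Finset.sum_congr rfl (fun k _ => by rw [hxc k, hyc k])]
      simp [Finset.sum_const, Finset.card_univ, mul_comm, mul_assoc]
    have hc0 : c ≠ 0 := by
      intro h; rw [h] at hcc; simp at hcc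
    have hn0' : (n:ℝ) ≠ 0 := by positivity
    have hd0 : d = 0 := by
      rcases mul_eq_zero.mp hcd with h | h
      · exact absurd h hn0'
      · rcases mul_eq_zero.mp h with h' | h'
        · exact absurd h' hc0
        · exact h'
    rw [hd0] at hdd; simp at hdd
  -- at least one eigenvalue equal to n
  have hex : ∃ i, lam i = n := by
    by_contra hno
    push_neg at hno
    have hAy : Qp n *ᵥ (fun _ => (1:ℝ)) = (n:ℝ) • (fun _ => (1:ℝ)) := by
      funext i
      rw [Matrix.mulVec, dotProduct]
      simpa using Qp_rowsum hn i
    have hwy : ∀ i, w i ⬝ᵥ (fun _ => (1:ℝ)) = 0 := by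
      intro i
      have h1 : w i ⬝ᵥ (Qp n *ᵥ (fun _ => (1:ℝ))) = (n:ℝ) * (w i ⬝ᵥ (fun _ => (1:ℝ))) := by
        rw [hAy, dotProduct_smul, smul_eq_mul]
      have h2 : w i ⬝ᵥ (Qp n *ᵥ (fun _ => (1:ℝ))) = lam i * (w i ⬝ᵥ (fun _ => (1:ℝ))) := by
        rw [Matrix.dotProduct_mulVec, ← hAT, Matrix.vecMul_transpose, hmv i,
          smul_dotProduct, smul_eq_mul]
      have h3 : ((n:ℝ) - lam i) * (w i ⬝ᵥ (fun _ => (1:ℝ))) = 0 := by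
        rw [sub_mul]; rw [h1] at h2; linarith
      rcases mul_eq_zero.mp h3 with h | h
      · exact absurd (by linarith [hle_n i] : lam i = (n:ℝ)) (hno i)
      · exact h
    have := congrFun (hcomplete _ hwy) ⟨0, hn0⟩
    simpa using this
  obtain ⟨i₀, hi₀⟩ := hex
  refine ⟨i₀, hA, fun h => ?_⟩
  have hh : h = hA := rfl
  subst hh
  exact ⟨hi₀, hle_n, fun i hi => huniq i i₀ hi hi₀⟩

end Stmt16Aux

theorem stmt16 (n : ℕ) (hn : 4 ≤ n) :
    kthLargest (Qp n) 1 = (n : ℝ) ∧ kthLargest (Qp n) 2 < (n : ℝ) := by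
  obtain ⟨i₀, hA, hfacts⟩ := Stmt16Aux.main_eig hn
  obtain ⟨hi₀, hle, huniq⟩ := hfacts hA
  have hlist : eigsList (Qp n) = Multiset.sort (Finset.univ.val.map hA.eigenvalues) (· ≤ ·) := by
    rw [eigsList, dif_pos hA]
  set l := eigsList (Qp n) with hl
  have hsorted : l.Pairwise (· ≤ ·) := by rw [hlist]; exact Multiset.pairwise_sort _ _
  have hlen : l.length = n := by
    rw [hlist, Multiset.length_sort]
    simp
  have hmem : (n:ℝ) ∈ l := by
    rw [hlist, Multiset.mem_sort]
    exact Multiset.mem_map.mpr ⟨i₀, Finset.mem_val.mpr (Finset.mem_univ i₀), hi₀⟩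
  have hub : ∀ a ∈ l, a ≤ (n:ℝ) := by
    intro a ha
    rw [hlist, Multiset.mem_sort] at ha
    obtain ⟨i, _, rfl⟩ := Multiset.mem_map.mp ha
    exact hle i
  have hcnt : l.count (n:ℝ) = 1 := by
    rw [hlist, ← Multiset.coe_count, Multiset.sort_eq, Multiset.count_map]
    have hfe : Finset.filter (fun a => (n:ℝ) = hA.eigenvalues a) Finset.univ = {i₀} := by
      ext a
      simp only [Finset.mem_filter, Finset.mem_univ, true_and, Finset.mem_singleton]
      constructor
      · intro h; exact huniq a h.symm
      · rintro rfl; exact hi₀.symm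
    have hfv : Multiset.filter (fun a => (n:ℝ) = hA.eigenvalues a) Finset.univ.val
        = ({i₀} : Finset (Fin n)).val := by
      rw [← Finset.filter_val, hfe]
    rw [hfv]
    simp
  have h2 : 2 ≤ l.length := by omega
  obtain ⟨e1, e2⟩ := Stmt16Aux.sorted_top l (n:ℝ) hsorted hmem hub hcnt h2
  rw [hlen] at e1 e2
  constructor
  · show (eigsList (Qp n)).getD (Fintype.card (Fin n) - 1) 0 = (n:ℝ)
    rw [Fintype.card_fin]
    exact e1
  · show (eigsList (Qp n)).getD (Fintype.card (Fin n) - 2) 0 < (n:ℝ)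
    rw [Fintype.card_fin]
    exact e2
end

section
/- Let n ≥ 15 be an integer, let μ = μ₂(𝔏(Q_n)) be the second-smallest eigenvalue of 𝔏(Q_n), and let v = (v₁,…,v_n)ᵀ be a unit eigenvector of 𝔏(Q_n) with eigenvalue μ that is entrywise monotone (v_i ≤ v_{i+1} for all 1 ≤ i ≤ n−1) and skew-symmetric (v_i = −v_{n+1−i} for all 1 ≤ i ≤ n). Then Σ_{i=1}^{n−1} (v_i − v_{i+1})² + 2(v_{n−1} − v_n)² < (n/(n+1))·μ·v_n². -/
open Matrix

lemma lap_row {n : ℕ} (v : Fin n → ℝ) (mu : ℝ)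
    (hev : Lap (Qmat n) *ᵥ v = mu • v) (i : Fin n) :
    ∑ j, Qmat n i j * (v i - v j) = mu * v i := by
  have h0 := congrFun hev i
  simp only [Lap, Matrix.mulVec, dotProduct, Matrix.sub_apply, Matrix.diagonal_apply,
    Pi.smul_apply, smul_eq_mul, sub_mul, ite_mul, zero_mul] at h0
  rw [Finset.sum_sub_distrib, Finset.sum_ite_eq Finset.univ i (fun x => (∑ j, Qmat n i j) * v x)] at h0
  simp only [Finset.mem_univ, if_true] at h0
  have : ∑ j, Qmat n i j * (v i - v j) = (∑ j, Qmat n i j) * v i - ∑ j, Qmat n i j * v j := by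
    rw [Finset.sum_mul, ← Finset.sum_sub_distrib]
    exact Finset.sum_congr rfl fun j _ => by ring
  rw [this]
  linarith [h0]

lemma Qoff {n : ℕ} (i j : Fin n) (v : Fin n → ℝ) (c : ℝ) :
    Qmat n i j * (v i - v j) * c =
      (if j.val = i.val + 1 then ((n:ℝ) - 2) * (v i - v j) * c else 0)
    + (if i.val = j.val + 1 then ((n:ℝ) - 2) * (v i - v j) * c else 0)
    + (if j.val = i.val + 2 then 2 * (v i - v j) * c else 0)
    + (if i.val = j.val + 2 then 2 * (v i - v j) * c else 0) := by
  rcases eq_or_ne i j with rfl | hij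
  · have h1 : ¬ (i.val = i.val + 1) := by omega
    have h2 : ¬ (i.val = i.val + 2) := by omega
    simp [h1, h2, sub_self]
  · have hv : i.val ≠ j.val := fun h => hij (Fin.ext h)
    simp only [Qmat]
    by_cases c1 : j.val = i.val + 1
    · have hd : ((i.val : ℤ) - (j.val : ℤ)).natAbs = 1 := by omega
      have h2 : ¬ (i.val = j.val + 1) := by omega
      have h3 : ¬ (j.val = i.val + 2) := by omega
      have h4 : ¬ (i.val = j.val + 2) := by omega
      have e1 : ¬ (i.val = i.val + 1 + 1) := by omega
      have e2 : ¬ (i.val = i.val + 1 + 2) := by omega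
      simp [hd, c1, h2, h3, h4, e1, e2]
    · by_cases c2 : i.val = j.val + 1
      · have hd : ((i.val : ℤ) - (j.val : ℤ)).natAbs = 1 := by omega
        have h3 : ¬ (j.val = i.val + 2) := by omega
        have h4 : ¬ (i.val = j.val + 2) := by omega
        have e1 : ¬ (j.val = j.val + 1 + 1) := by omega
        have e2 : ¬ (j.val = j.val + 1 + 2) := by omega
        simp [hd, c1, c2, h3, h4, e1, e2]
      · by_cases c3 : j.val = i.val + 2
        · have hd : ((i.val : ℤ) - (j.val : ℤ)).natAbs = 2 := by omega
          have h4 : ¬ (i.val = j.val + 2) := by omega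
          have e1 : ¬ (i.val = i.val + 2 + 1) := by omega
          have e2 : ¬ (i.val = i.val + 2 + 2) := by omega
          simp [hd, c1, c2, c3, h4, e1, e2]
        · by_cases c4 : i.val = j.val + 2
          · have hd : ((i.val : ℤ) - (j.val : ℤ)).natAbs = 2 := by omega
            have e1 : ¬ (j.val = j.val + 2 + 1) := by omega
            have e2 : ¬ (j.val = j.val + 2 + 2) := by omega
            simp [hd, c1, c2, c3, c4, e1, e2]
          · have hd0 : ((i.val : ℤ) - (j.val : ℤ)).natAbs ≠ 0 := by omega
            have hd1 : ((i.val : ℤ) - (j.val : ℤ)).natAbs ≠ 1 := by omega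
            have hd2 : ((i.val : ℤ) - (j.val : ℤ)).natAbs ≠ 2 := by omega
            simp [hd0, hd1, hd2, c1, c2, c3, c4]

lemma sum_ite_eq_range (n c : ℕ) (f : ℕ → ℝ) :
    ∑ j ∈ Finset.range n, (if j = c then f j else 0) = if c < n then f c else 0 := by
  rw [Finset.sum_ite_eq' (Finset.range n) c f]
  simp

lemma sum_range_trunc (n m : ℕ) (hm : m ≤ n) (f : ℕ → ℝ) :
    ∑ i ∈ Finset.range n, (if i < m then f i else 0) = ∑ i ∈ Finset.range m, f i := by
  have h1 : ∑ i ∈ Finset.range m, (if i < m then f i else 0)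
      = ∑ i ∈ Finset.range n, (if i < m then f i else 0) :=
    Finset.sum_subset (Finset.range_subset_range.mpr hm) (fun x _ hnx => by
      rw [if_neg]; simp only [Finset.mem_range] at hnx; omega)
  rw [← h1]
  exact Finset.sum_congr rfl fun i hi => if_pos (Finset.mem_range.mp hi)

lemma dsum1 (n k : ℕ) (g : ℕ → ℕ → ℝ) :
    ∑ a ∈ Finset.range n, ∑ b ∈ Finset.range n, (if b = a + k then g a b else 0)
      = ∑ a ∈ Finset.range (n - k), g a (a + k) := by
  have h : ∀ a ∈ Finset.range n,
      ∑ b ∈ Finset.range n, (if b = a + k then g a b else 0)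
        = if a < n - k then g a (a + k) else 0 := fun a ha => by
    rw [sum_ite_eq_range n (a + k) (fun b => g a b)]
    by_cases h : a + k < n
    · rw [if_pos h, if_pos (by omega)]
    · rw [if_neg h, if_neg (by omega)]
  rw [Finset.sum_congr rfl h, sum_range_trunc n (n - k) (by omega)]

lemma dsum2 (n k : ℕ) (g : ℕ → ℕ → ℝ) :
    ∑ a ∈ Finset.range n, ∑ b ∈ Finset.range n, (if a = b + k then g a b else 0)
      = ∑ b ∈ Finset.range (n - k), g (b + k) b := by
  rw [Finset.sum_comm]
  exact dsum1 n k (fun b a => g a b)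

set_option maxHeartbeats 1600000 in
lemma stmt18_arith (N S T mu b d d' : ℝ) (hN : 15 ≤ N)
    (hmuQ : mu = (N - 2) * S + 2 * T)
    (hrow : mu * b = N * d + 2 * d')
    (hd' : 0 ≤ d') (hd : 0 ≤ d) (hdb : d ≤ b)
    (hTlo : 2 * S - 2 * d ^ 2 ≤ T) (hThi : T ≤ 4 * S)
    (hS4 : S ≤ 4 * b ^ 2) (hd2S : d ^ 2 ≤ S)
    (hone : 1 ≤ N * b ^ 2 - 4 * b * d + 2 * d ^ 2)
    (ht1 : b ^ 2 ≤ 1)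
    (hb : 0 < b) (hSpos : 0 < S) :
    S + 2 * d ^ 2 < N / (N + 1) * mu * b ^ 2 := by
  have hN0 : (0:ℝ) < N := by linarith
  have hmupos : 0 < mu := by nlinarith
  have hmulo : (N + 2) * S - 4 * d ^ 2 ≤ mu := by nlinarith
  have hmuhi : mu ≤ 4 * (N + 6) * b ^ 2 := by nlinarith
  have hdmu : N * d ≤ mu * b := by nlinarith
  have h2bd : 2 * b * d ≤ N * b ^ 2 - 1 := by nlinarith
  have hgoal : N / (N + 1) * mu * b ^ 2 = N * mu * b ^ 2 / (N + 1) := by ring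
  rw [hgoal, lt_div_iff₀ (by linarith : (0:ℝ) < N + 1)]
  rcases lt_or_ge (b ^ 2 * (N * (3 * N + 4))) (4 * (N + 1)) with hA | hB
  · -- Case A
    have hdd : 2 * N * d ^ 2 ≤ mu * (N * b ^ 2 - 1) := by
      have h1 : (N * d) * (2 * b * d) ≤ (mu * b) * (N * b ^ 2 - 1) :=
        mul_le_mul hdmu h2bd (by positivity) (by positivity)
      have h2 : (2 * N * d ^ 2) * b ≤ (mu * (N * b ^ 2 - 1)) * b := by nlinarith [h1]
      exact le_of_mul_le_mul_right h2 hb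
    have fact1 : N * (N + 1) * ((N + 2) * S - 4 * d ^ 2) ≤ N * (N + 1) * mu :=
      mul_le_mul_of_nonneg_left hmulo (by positivity)
    have fact2 : (N + 1) * (N + 4) * (2 * N * d ^ 2) ≤ (N + 1) * (N + 4) * (mu * (N * b ^ 2 - 1)) :=
      mul_le_mul_of_nonneg_left hdd (by positivity)
    have fact3 : mu * (b ^ 2 * (N * (3 * N + 4))) < mu * (4 * (N + 1)) :=
      mul_lt_mul_of_pos_left hA hmupos
    have hG : N * (N + 2) * ((S + 2 * d ^ 2) * (N + 1)) < N * (N + 2) * (N * mu * b ^ 2) := by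
      linarith [fact1, fact2, fact3]
    exact lt_of_mul_lt_mul_left hG (by positivity)
  · -- Case B
    have hd2 : N ^ 2 * d ^ 2 ≤ 4 * (N + 6) * (mu * b ^ 2 * b ^ 2) := by
      have h1 : (N * d) * (N * d) ≤ (mu * b) * (mu * b) :=
        mul_le_mul hdmu hdmu (by positivity) (by positivity)
      have h2 : (mu * b ^ 2) * mu ≤ (mu * b ^ 2) * (4 * (N + 6) * b ^ 2) :=
        mul_le_mul_of_nonneg_left hmuhi (by positivity)
      linarith [h1, h2]
    have hNp2 : 15 * N ≤ N ^ 2 := by nlinarith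
    have hNp3 : 15 * N ^ 2 ≤ N ^ 3 := by
      have := mul_le_mul_of_nonneg_left hNp2 hN0.le; linarith [this]
    have hNp4 : 15 * N ^ 3 ≤ N ^ 4 := by
      have := mul_le_mul_of_nonneg_left hNp3 hN0.le; linarith [this]
    have hNp5 : 15 * N ^ 4 ≤ N ^ 5 := by
      have := mul_le_mul_of_nonneg_left hNp4 hN0.le; linarith [this]
    have hP : N ^ 2 * (N + 1) + 8 * (N + 1) * (N + 4) * (N + 6) * (b ^ 2) ^ 2
        < N ^ 3 * (N + 2) * b ^ 2 := by
      set t := b ^ 2 with hts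
      have ht0 : (0:ℝ) ≤ t := by positivity
      have hu : 0 ≤ t * (N * (3 * N + 4)) - 4 * (N + 1) := by linarith
      have hs : 0 ≤ 1 - t := by linarith
      have hF1 : (0:ℝ) < N ^ 4 - 7 * N ^ 3 - 89 * N ^ 2 - 272 * N - 192 := by linarith
      have hq : (0:ℝ) < 3 * N ^ 5 + 4 * N ^ 4 - 128 * N ^ 3 - 1024 * N ^ 2 - 1664 * N - 768 := by
        linarith
      have hG0 : (0:ℝ) < (N + 1) * ((N + 4) *
          (3 * N ^ 5 + 4 * N ^ 4 - 128 * N ^ 3 - 1024 * N ^ 2 - 1664 * N - 768)) :=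
        mul_pos (by linarith) (mul_pos (by linarith) hq)
      have hApos : (0:ℝ) < 8 * (N + 1) * (N + 4) * (N + 6) := by positivity
      have hu1 : (0:ℝ) < 3 * N ^ 2 - 4 := by linarith
      have hC2 : (0:ℝ) < N * (3 * N + 4) := mul_pos hN0 (by linarith)
      have hC : (0:ℝ) < (3 * N ^ 2 - 4) * (N * (3 * N + 4)) := mul_pos hu1 hC2
      set F : ℝ := N ^ 3 * (N + 2) * t - N ^ 2 * (N + 1)
          - 8 * (N + 1) * (N + 4) * (N + 6) * t ^ 2 with hF
      have hident : F * ((3 * N ^ 2 - 4) * (N * (3 * N + 4))) =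
          (1 - t) * ((N + 1) * ((N + 4) *
            (3 * N ^ 5 + 4 * N ^ 4 - 128 * N ^ 3 - 1024 * N ^ 2 - 1664 * N - 768)))
          + (t * (N * (3 * N + 4)) - 4 * (N + 1)) * ((N * (3 * N + 4)) *
            (N ^ 4 - 7 * N ^ 3 - 89 * N ^ 2 - 272 * N - 192))
          + (8 * (N + 1) * (N + 4) * (N + 6) * (3 * N ^ 2 - 4)) *
            ((t * (N * (3 * N + 4)) - 4 * (N + 1)) * (1 - t)) := by
        rw [hF]; ring
      have hpos : 0 < F * ((3 * N ^ 2 - 4) * (N * (3 * N + 4))) := by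
        rw [hident]
        have hT3 : 0 ≤ (8 * (N + 1) * (N + 4) * (N + 6) * (3 * N ^ 2 - 4)) *
            ((t * (N * (3 * N + 4)) - 4 * (N + 1)) * (1 - t)) :=
          mul_nonneg (mul_pos hApos hu1).le (mul_nonneg hu hs)
        have hT2 : 0 ≤ (t * (N * (3 * N + 4)) - 4 * (N + 1)) * ((N * (3 * N + 4)) *
            (N ^ 4 - 7 * N ^ 3 - 89 * N ^ 2 - 272 * N - 192)) :=
          mul_nonneg hu (mul_pos hC2 hF1).le
        rcases eq_or_lt_of_le hs with h1 | h1
        · have htone : t = 1 := by linarith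
          have hu' : (0:ℝ) < t * (N * (3 * N + 4)) - 4 * (N + 1) := by
            rw [htone]; linarith
          have hT2' := mul_pos hu' (mul_pos hC2 hF1)
          have hT1 : 0 ≤ (1 - t) * ((N + 1) * ((N + 4) *
              (3 * N ^ 5 + 4 * N ^ 4 - 128 * N ^ 3 - 1024 * N ^ 2 - 1664 * N - 768))) :=
            mul_nonneg hs hG0.le
          linarith [hT1, hT2', hT3]
        · have hT1 := mul_pos h1 hG0
          linarith [hT1, hT2, hT3]
      have hFpos : 0 < F := by
        by_contra hc
        push_neg at hc
        have := mul_nonpos_of_nonpos_of_nonneg hc hC.le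
        linarith [hpos, this]
      rw [hF] at hFpos; linarith
    have fact0 : N ^ 2 * (N + 1) * ((N + 2) * S - 4 * d ^ 2) ≤ N ^ 2 * (N + 1) * mu :=
      mul_le_mul_of_nonneg_left hmulo (by positivity)
    have fact1 : (N + 1) * (2 * N + 8) * (N ^ 2 * d ^ 2)
        ≤ (N + 1) * (2 * N + 8) * (4 * (N + 6) * (mu * b ^ 2 * b ^ 2)) :=
      mul_le_mul_of_nonneg_left hd2 (by positivity)
    have fact2 : mu * (N ^ 2 * (N + 1) + 8 * (N + 1) * (N + 4) * (N + 6) * (b ^ 2) ^ 2)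
        < mu * (N ^ 3 * (N + 2) * b ^ 2) := mul_lt_mul_of_pos_left hP hmupos
    have hG : (N ^ 2 * (N + 2)) * ((S + 2 * d ^ 2) * (N + 1)) < (N ^ 2 * (N + 2)) * (N * mu * b ^ 2) := by
      linarith [fact0, fact1, fact2]
    exact lt_of_mul_lt_mul_left hG (by positivity)

set_option maxHeartbeats 1000000 in
theorem stmt18 (n : ℕ) (hn : 15 ≤ n) (mu : ℝ) (hmu : mu = kthSmallest (Lap (Qmat n)) 2)
    (v : Fin n → ℝ) (hv : v ≠ 0) (hunit : ∑ i, (v i) ^ 2 = 1)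
    (hev : Lap (Qmat n) *ᵥ v = mu • v)
    (hmono : ∀ (i : Fin n) (h : i.val + 1 < n), v i ≤ v ⟨i.val + 1, h⟩)
    (hskew : ∀ i : Fin n, v i = - v ⟨n - 1 - i.val, by have := i.isLt; omega⟩) :
    (∑ i : Fin (n - 1),
        (v ⟨i.val, by have := i.isLt; omega⟩ - v ⟨i.val + 1, by have := i.isLt; omega⟩) ^ 2) +
        2 * (v ⟨n - 2, by omega⟩ - v ⟨n - 1, by omega⟩) ^ 2 <
      ((n : ℝ) / ((n : ℝ) + 1)) * mu * (v ⟨n - 1, by omega⟩) ^ 2 := by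
  classical
  have hNcast : (15:ℝ) ≤ (n:ℝ) := by exact_mod_cast hn
  set w : ℕ → ℝ := fun i => if h : i < n then v ⟨i, h⟩ else 0 with hw
  have hwv : ∀ i : Fin n, v i = w i.val := fun i => by
    rw [hw]; simp only; rw [dif_pos i.isLt]
  have hrow := lap_row v mu hev
  set S : ℝ := ∑ k ∈ Finset.range (n-1), (w k - w (k+1))^2 with hS
  set T : ℝ := ∑ k ∈ Finset.range (n-2), (w k - w (k+2))^2 with hT
  -- quadratic form identity
  have hQF : ((n:ℝ) - 2) * S + 2 * T = mu := by
    have h2 : ∑ i : Fin n, ∑ j : Fin n, Qmat n i j * (v i - v j) * v i = mu := by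
      calc ∑ i : Fin n, ∑ j : Fin n, Qmat n i j * (v i - v j) * v i
          = ∑ i : Fin n, (∑ j : Fin n, Qmat n i j * (v i - v j)) * v i :=
            Finset.sum_congr rfl fun i _ => by rw [Finset.sum_mul]
        _ = ∑ i : Fin n, mu * (v i)^2 := Finset.sum_congr rfl fun i _ => by rw [hrow i]; ring
        _ = mu * ∑ i : Fin n, (v i)^2 := by rw [Finset.mul_sum]
        _ = mu := by rw [hunit, mul_one]
    have h3 : ∀ i j : Fin n, Qmat n i j * (v i - v j) * v i =
        (fun a b : ℕ =>
        (if b = a + 1 then ((n:ℝ) - 2) * (w a - w b) * w a else 0)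
      + (if a = b + 1 then ((n:ℝ) - 2) * (w a - w b) * w a else 0)
      + (if b = a + 2 then 2 * (w a - w b) * w a else 0)
      + (if a = b + 2 then 2 * (w a - w b) * w a else 0)) i.val j.val := fun i j => by
      rw [Qoff i j v (v i), hwv i, hwv j]
    have h4 : ∑ i : Fin n, ∑ j : Fin n, Qmat n i j * (v i - v j) * v i
        = ∑ a ∈ Finset.range n, ∑ b ∈ Finset.range n,
        ((if b = a + 1 then ((n:ℝ) - 2) * (w a - w b) * w a else 0)
      + (if a = b + 1 then ((n:ℝ) - 2) * (w a - w b) * w a else 0)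
      + (if b = a + 2 then 2 * (w a - w b) * w a else 0)
      + (if a = b + 2 then 2 * (w a - w b) * w a else 0)) := by
      rw [← Fin.sum_univ_eq_sum_range (fun a => ∑ b ∈ Finset.range n,
        ((if b = a + 1 then ((n:ℝ) - 2) * (w a - w b) * w a else 0)
      + (if a = b + 1 then ((n:ℝ) - 2) * (w a - w b) * w a else 0)
      + (if b = a + 2 then 2 * (w a - w b) * w a else 0)
      + (if a = b + 2 then 2 * (w a - w b) * w a else 0))) n]
      refine Finset.sum_congr rfl fun i _ => ?_
      rw [← Fin.sum_univ_eq_sum_range (fun b =>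
        ((if b = i.val + 1 then ((n:ℝ) - 2) * (w i.val - w b) * w i.val else 0)
      + (if i.val = b + 1 then ((n:ℝ) - 2) * (w i.val - w b) * w i.val else 0)
      + (if b = i.val + 2 then 2 * (w i.val - w b) * w i.val else 0)
      + (if i.val = b + 2 then 2 * (w i.val - w b) * w i.val else 0))) n]
      exact Finset.sum_congr rfl fun j _ => h3 i j
    rw [h4] at h2
    rw [← h2]
    have hsplit : ∀ a ∈ Finset.range n, ∑ b ∈ Finset.range n,
        ((if b = a + 1 then ((n:ℝ) - 2) * (w a - w b) * w a else 0)
      + (if a = b + 1 then ((n:ℝ) - 2) * (w a - w b) * w a else 0)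
      + (if b = a + 2 then 2 * (w a - w b) * w a else 0)
      + (if a = b + 2 then 2 * (w a - w b) * w a else 0))
      = (∑ b ∈ Finset.range n, (if b = a + 1 then ((n:ℝ) - 2) * (w a - w b) * w a else 0))
      + (∑ b ∈ Finset.range n, (if a = b + 1 then ((n:ℝ) - 2) * (w a - w b) * w a else 0))
      + (∑ b ∈ Finset.range n, (if b = a + 2 then 2 * (w a - w b) * w a else 0))
      + (∑ b ∈ Finset.range n, (if a = b + 2 then 2 * (w a - w b) * w a else 0)) := by
      intro a _
      rw [Finset.sum_add_distrib, Finset.sum_add_distrib, Finset.sum_add_distrib]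
    rw [Finset.sum_congr rfl hsplit, Finset.sum_add_distrib, Finset.sum_add_distrib,
      Finset.sum_add_distrib,
      dsum1 n 1 (fun a b => ((n:ℝ) - 2) * (w a - w b) * w a),
      dsum2 n 1 (fun a b => ((n:ℝ) - 2) * (w a - w b) * w a),
      dsum1 n 2 (fun a b => 2 * (w a - w b) * w a),
      dsum2 n 2 (fun a b => 2 * (w a - w b) * w a)]
    have hc1 : ((n:ℝ) - 2) * S
        = (∑ a ∈ Finset.range (n-1), ((n:ℝ) - 2) * (w a - w (a+1)) * w a)
        + (∑ b ∈ Finset.range (n-1), ((n:ℝ) - 2) * (w (b+1) - w b) * w (b+1)) := by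
      rw [hS, Finset.mul_sum, ← Finset.sum_add_distrib]
      exact Finset.sum_congr rfl fun k _ => by ring
    have hc2 : 2 * T
        = (∑ a ∈ Finset.range (n-2), 2 * (w a - w (a+2)) * w a)
        + (∑ b ∈ Finset.range (n-2), 2 * (w (b+2) - w b) * w (b+2)) := by
      rw [hT, Finset.mul_sum, ← Finset.sum_add_distrib]
      exact Finset.sum_congr rfl fun k _ => by ring
    rw [hc1, hc2]; ring
  -- last row identity
  have hlast : mu * w (n-1) = ((n:ℝ) - 2) * (w (n-1) - w (n-2)) + 2 * (w (n-1) - w (n-3)) := by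
    have h0 := hrow ⟨n-1, by omega⟩
    have hlv : (⟨n-1, by omega⟩ : Fin n).val = n - 1 := rfl
    have h3 : ∀ j : Fin n, Qmat n ⟨n-1, by omega⟩ j * (v ⟨n-1, by omega⟩ - v j) =
        (fun b : ℕ =>
        (if b = (n-1) + 1 then ((n:ℝ) - 2) * (w (n-1) - w b) else 0)
      + (if (n-1) = b + 1 then ((n:ℝ) - 2) * (w (n-1) - w b) else 0)
      + (if b = (n-1) + 2 then 2 * (w (n-1) - w b) else 0)
      + (if (n-1) = b + 2 then 2 * (w (n-1) - w b) else 0)) j.val := fun j => by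
      have h := Qoff ⟨n-1, by omega⟩ j v 1
      rw [mul_one] at h
      rw [h, hwv ⟨n-1, by omega⟩, hwv j]
      simp only [hlv, mul_one]
    have h4 : ∑ j : Fin n, Qmat n ⟨n-1, by omega⟩ j * (v ⟨n-1, by omega⟩ - v j)
        = ∑ b ∈ Finset.range n,
        ((if b = (n-1) + 1 then ((n:ℝ) - 2) * (w (n-1) - w b) else 0)
      + (if (n-1) = b + 1 then ((n:ℝ) - 2) * (w (n-1) - w b) else 0)
      + (if b = (n-1) + 2 then 2 * (w (n-1) - w b) else 0)
      + (if (n-1) = b + 2 then 2 * (w (n-1) - w b) else 0)) := by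
      rw [← Fin.sum_univ_eq_sum_range (fun b =>
        ((if b = (n-1) + 1 then ((n:ℝ) - 2) * (w (n-1) - w b) else 0)
      + (if (n-1) = b + 1 then ((n:ℝ) - 2) * (w (n-1) - w b) else 0)
      + (if b = (n-1) + 2 then 2 * (w (n-1) - w b) else 0)
      + (if (n-1) = b + 2 then 2 * (w (n-1) - w b) else 0))) n]
      exact Finset.sum_congr rfl fun j _ => h3 j
    rw [h4] at h0
    rw [Finset.sum_add_distrib, Finset.sum_add_distrib, Finset.sum_add_distrib] at h0
    have hc2 : ∀ b ∈ Finset.range n,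
        (if (n-1) = b + 1 then ((n:ℝ) - 2) * (w (n-1) - w b) else 0)
          = (if b = n-2 then ((n:ℝ) - 2) * (w (n-1) - w b) else 0) := fun b _ => by
      by_cases hb : b = n - 2
      · rw [if_pos hb, if_pos (by omega)]
      · rw [if_neg hb, if_neg (by omega)]
    have hc4 : ∀ b ∈ Finset.range n,
        (if (n-1) = b + 2 then 2 * (w (n-1) - w b) else 0)
          = (if b = n-3 then 2 * (w (n-1) - w b) else 0) := fun b _ => by
      by_cases hb : b = n - 3
      · rw [if_pos hb, if_pos (by omega)]
      · rw [if_neg hb, if_neg (by omega)]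
    rw [Finset.sum_congr rfl hc2, Finset.sum_congr rfl hc4,
      sum_ite_eq_range n ((n-1)+1) (fun b => ((n:ℝ) - 2) * (w (n-1) - w b)),
      sum_ite_eq_range n (n-2) (fun b => ((n:ℝ) - 2) * (w (n-1) - w b)),
      sum_ite_eq_range n ((n-1)+2) (fun b => 2 * (w (n-1) - w b)),
      sum_ite_eq_range n (n-3) (fun b => 2 * (w (n-1) - w b)),
      if_neg (by omega : ¬ ((n-1)+1 < n)), if_pos (by omega : n-2 < n),
      if_neg (by omega : ¬ ((n-1)+2 < n)), if_pos (by omega : n-3 < n),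
      hwv ⟨n-1, by omega⟩] at h0
    rw [hlv] at h0
    linarith [h0]
  -- skew and monotone facts on w
  have hskw : ∀ a, a < n → w a = - w (n - 1 - a) := fun a ha => by
    have h := hskew ⟨a, ha⟩
    rw [hwv ⟨a, ha⟩, hwv ⟨n - 1 - (⟨a, ha⟩ : Fin n).val, by omega⟩] at h
    exact h
  have hmon : ∀ a, a + 1 < n → w a ≤ w (a+1) := fun a h => by
    have h2 := hmono ⟨a, by omega⟩ (by exact h)
    rw [hwv ⟨a, by omega⟩, hwv ⟨a+1, by exact h⟩] at h2
    exact h2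
  have hchain : ∀ a c : ℕ, a ≤ c → c < n → w a ≤ w c := by
    intro a c hac hcn
    induction c with
    | zero => have : a = 0 := by omega
              rw [this]
    | succ m ih =>
      rcases Nat.lt_or_ge a (m+1) with h | h
      · exact le_trans (ih (by omega) (by omega)) (hmon m hcn)
      · have : a = m + 1 := by omega
        rw [this]
  -- unit norm on w
  have hone1 : ∑ i ∈ Finset.range n, (w i)^2 = 1 := by
    rw [← hunit, ← Fin.sum_univ_eq_sum_range (fun i => (w i)^2) n]
    exact Finset.sum_congr rfl fun i _ => by rw [hwv i]
  -- basic w facts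
  have hw0 : w 0 = - w (n-1) := by
    have h := hskw 0 (by omega)
    rw [(by omega : n - 1 - 0 = n - 1)] at h
    exact h
  have hw1 : w 1 = - w (n-2) := by
    have h := hskw 1 (by omega)
    rw [(by omega : n - 1 - 1 = n - 2)] at h
    exact h
  have hble : ∀ a, a < n → w a ≤ w (n-1) := fun a ha => hchain a (n-1) (by omega) (by omega)
  have hgeb : ∀ a, a < n → - w (n-1) ≤ w a := fun a ha => by
    have h1 := hble (n-1-a) (by omega)
    have h2 := hskw a ha
    linarith
  have hb0n : 0 ≤ w (n-1) := by
    have := hgeb (n-1) (by omega); linarith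
  have hwn2 : 0 ≤ w (n-2) := by
    have h := hchain 1 (n-2) (by omega) (by omega)
    rw [hw1] at h; linarith
  have hd0 : 0 ≤ w (n-1) - w (n-2) := by
    have h := hmon (n-2) (by omega)
    rw [(by omega : n - 2 + 1 = n - 1)] at h
    linarith
  have hd'0 : 0 ≤ w (n-2) - w (n-3) := by
    have h := hmon (n-3) (by omega)
    rw [(by omega : n - 3 + 1 = n - 2)] at h
    linarith
  have ht1 : (w (n-1))^2 ≤ 1 := by
    rw [← hone1]
    exact Finset.single_le_sum (f := fun i => (w i)^2) (fun i _ => sq_nonneg _)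
      (Finset.mem_range.mpr (by omega))
  -- the norm lower bound
  have hone : 1 ≤ (n:ℝ) * (w (n-1))^2 - 4 * (w (n-1)) * (w (n-1) - w (n-2))
      + 2 * (w (n-1) - w (n-2))^2 := by
    have key : ∀ i ∈ Finset.range n, (w i)^2 ≤
        (w (n-1))^2 + (if i = 1 then (w (n-2))^2 - (w (n-1))^2 else 0)
          + (if i = n-2 then (w (n-2))^2 - (w (n-1))^2 else 0) := by
      intro i hi
      by_cases h1 : i = 1
      · rw [if_pos h1, if_neg (by omega), h1, hw1]
        ring_nf
        linarith
      · by_cases h2 : i = n-2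
        · rw [if_neg h1, if_pos h2, h2]
          linarith
        · rw [if_neg h1, if_neg h2]
          have hs := sq_le_sq' (hgeb i (Finset.mem_range.mp hi)) (hble i (Finset.mem_range.mp hi))
          linarith
    have hsum := Finset.sum_le_sum key
    rw [hone1, Finset.sum_add_distrib, Finset.sum_add_distrib,
      sum_ite_eq_range n 1 (fun _ => (w (n-2))^2 - (w (n-1))^2),
      sum_ite_eq_range n (n-2) (fun _ => (w (n-2))^2 - (w (n-1))^2),
      if_pos (by omega : 1 < n), if_pos (by omega : n-2 < n),
      Finset.sum_const, Finset.card_range, nsmul_eq_mul] at hsum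
    nlinarith [hsum]
  -- telescoping
  have hsumE : ∑ k ∈ Finset.range (n-1), (w (k+1) - w k) = 2 * w (n-1) := by
    rw [Finset.sum_range_sub w (n-1), hw0]; ring
  have hEn : ∀ k ∈ Finset.range (n-1), 0 ≤ w (k+1) - w k := fun k hk => by
    have := hmon k (by have := Finset.mem_range.mp hk; omega); linarith
  have hS4 : S ≤ 4 * (w (n-1))^2 := by
    have h1 : ∀ k ∈ Finset.range (n-1), (w k - w (k+1))^2 ≤ (w (k+1) - w k) * (2 * w (n-1)) := by
      intro k hk
      have h2 := Finset.single_le_sum hEn hk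
      rw [hsumE] at h2
      have h3 := hEn k hk
      nlinarith [h2, h3]
    calc S ≤ ∑ k ∈ Finset.range (n-1), (w (k+1) - w k) * (2 * w (n-1)) := Finset.sum_le_sum h1
      _ = (∑ k ∈ Finset.range (n-1), (w (k+1) - w k)) * (2 * w (n-1)) := by rw [Finset.sum_mul]
      _ = 4 * (w (n-1))^2 := by rw [hsumE]; ring
  have hd2S : (w (n-1) - w (n-2))^2 ≤ S := by
    have h := Finset.single_le_sum (f := fun k => (w k - w (k+1))^2)
      (fun k _ => sq_nonneg _) (Finset.mem_range.mpr (by omega : n-2 < n-1))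
    simp only [(by omega : n-2+1 = n-1)] at h
    calc (w (n-1) - w (n-2))^2 = (w (n-2) - w (n-1))^2 := by ring
      _ ≤ S := h
  have hb0 : 0 < w (n-1) := by
    rcases lt_or_eq_of_le hb0n with h | h
    · exact h
    · exfalso
      have hb : w (n-1) = 0 := h.symm
      have h2 : w (n-2) = 0 := by
        have := hd0; have := hwn2; linarith [hd0, hwn2, hb]
      rw [hb, h2] at hone
      norm_num at hone
  have hSpos : 0 < S := by
    have hsum0 : (∑ _k ∈ Finset.range (n-1), (0:ℝ)) < ∑ k ∈ Finset.range (n-1), (w (k+1) - w k) := by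
      rw [hsumE, Finset.sum_const, smul_zero]
      linarith
    obtain ⟨k, hk, hke⟩ := Finset.exists_lt_of_sum_lt hsum0
    have h1 : 0 < (w k - w (k+1))^2 := by nlinarith [hke]
    have h2 := Finset.single_le_sum (f := fun k => (w k - w (k+1))^2)
      (fun k _ => sq_nonneg _) hk
    exact lt_of_lt_of_le h1 h2
  -- shifted sums
  have hsplitS : S = (∑ k ∈ Finset.range (n-2), (w k - w (k+1))^2) + (w (n-2) - w (n-1))^2 := by
    rw [hS, (by omega : n-1 = n-2+1), Finset.sum_range_succ]
  have hshiftS : (∑ k ∈ Finset.range (n-2), (w (k+1) - w (k+2))^2) = S - (w 0 - w 1)^2 := by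
    have h := Finset.sum_range_succ' (fun k => (w k - w (k+1))^2) (n-2)
    rw [(by omega : n-2+1 = n-1)] at h
    have hcg : (∑ k ∈ Finset.range (n-2), (w (k+1) - w (k+1+1))^2)
        = ∑ k ∈ Finset.range (n-2), (w (k+1) - w (k+2))^2 :=
      Finset.sum_congr rfl fun k _ => by norm_num
    rw [hS]
    rw [h, ← hcg]
    ring
  have hTlo : 2 * S - 2 * (w (n-1) - w (n-2))^2 ≤ T := by
    have key : ∀ k ∈ Finset.range (n-2),
        (w k - w (k+1))^2 + (w (k+1) - w (k+2))^2 ≤ (w k - w (k+2))^2 := by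
      intro k hk
      have h1 := hEn k (Finset.mem_range.mpr (by have := Finset.mem_range.mp hk; omega))
      have h2 := hEn (k+1) (Finset.mem_range.mpr (by have := Finset.mem_range.mp hk; omega))
      nlinarith [mul_nonneg h1 h2]
    have hsum := Finset.sum_le_sum key
    rw [Finset.sum_add_distrib, hshiftS] at hsum
    have hw01 : (w 0 - w 1)^2 = (w (n-1) - w (n-2))^2 := by
      rw [hw0, hw1]; ring
    have hfirst : (∑ k ∈ Finset.range (n-2), (w k - w (k+1))^2)
        = S - (w (n-2) - w (n-1))^2 := by rw [hsplitS]; ring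
    rw [hfirst, hw01] at hsum
    have : (w (n-2) - w (n-1))^2 = (w (n-1) - w (n-2))^2 := by ring
    rw [this] at hsum
    linarith [hsum]
  have hThi : T ≤ 4 * S := by
    have key : ∀ k ∈ Finset.range (n-2),
        (w k - w (k+2))^2 ≤ 2*(w k - w (k+1))^2 + 2*(w (k+1) - w (k+2))^2 := by
      intro k _
      nlinarith [sq_nonneg (w k - 2*w (k+1) + w (k+2))]
    have hsum := Finset.sum_le_sum key
    rw [Finset.sum_add_distrib] at hsum
    have e1 : (∑ k ∈ Finset.range (n-2), 2*(w k - w (k+1))^2)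
        = 2 * ∑ k ∈ Finset.range (n-2), (w k - w (k+1))^2 := by
      rw [Finset.mul_sum]
    have e2 : (∑ k ∈ Finset.range (n-2), 2*(w (k+1) - w (k+2))^2)
        = 2 * ∑ k ∈ Finset.range (n-2), (w (k+1) - w (k+2))^2 := by
      rw [Finset.mul_sum]
    rw [e1, e2, hshiftS] at hsum
    have hfirst : (∑ k ∈ Finset.range (n-2), (w k - w (k+1))^2)
        = S - (w (n-2) - w (n-1))^2 := by rw [hsplitS]; ring
    rw [hfirst] at hsum
    nlinarith [hsum, sq_nonneg (w (n-2) - w (n-1)), sq_nonneg (w 0 - w 1)]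
  -- final assembly
  have main := stmt18_arith (n:ℝ) S T mu (w (n-1)) (w (n-1) - w (n-2)) (w (n-2) - w (n-3))
    hNcast hQF.symm (by linear_combination hlast) hd'0 hd0 (by linarith [hwn2])
    hTlo hThi hS4 hd2S hone ht1 hb0 hSpos
  have hgoalS : (∑ i : Fin (n - 1),
      (v ⟨i.val, by have := i.isLt; omega⟩ - v ⟨i.val + 1, by have := i.isLt; omega⟩) ^ 2) = S := by
    rw [hS, ← Fin.sum_univ_eq_sum_range (fun k => (w k - w (k+1))^2) (n-1)]
    exact Finset.sum_congr rfl fun i _ => by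
      rw [hwv ⟨i.val, by have := i.isLt; omega⟩, hwv ⟨i.val + 1, by have := i.isLt; omega⟩]
  rw [hgoalS, hwv ⟨n-2, by omega⟩, hwv ⟨n-1, by omega⟩]
  have hsq : (w (n-2) - w (n-1))^2 = (w (n-1) - w (n-2))^2 := by ring
  calc S + 2 * (w (n-2) - w (n-1))^2 = S + 2 * (w (n-1) - w (n-2))^2 := by rw [hsq]
    _ < (n:ℝ) / ((n:ℝ) + 1) * mu * (w (n-1))^2 := main
end
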